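/- Let G be the complete 3-partite graph with three parts each of size n. Then si(G) = n², which also equals |V(G)|²/9 and |E(G)|/3. -/
import Mathlib


/-- `(a, b, L)` is a `d`-simultaneous interval representation of `G`:
each vertex `v` gets a nonempty open interval `(a v, b v)` and a label set
`L v ⊆ {1,…,d}`, and distinct vertices are adjacent iff both their intervals
and their label sets intersect. -/
def IsSIRep {V : Type*} (G : SimpleGraph V) (d : ℕ)
    (a b : V → ℝ) (L : V → Finset (Fin d)) : Prop :=
  (∀ v, a v < b v) ∧
  ∀ u v : V, u ≠ v →
    (G.Adj u v ↔ (Set.Ioo (a u) (b u) ∩ Set.Ioo (a v) (b v)).Nonempty ∧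
      (L u ∩ L v).Nonempty)

/-- The simultaneous interval number of `G`. -/
noncomputable def si {V : Type*} (G : SimpleGraph V) : ℕ :=
  sInf {d | ∃ a b L, IsSIRep G d a b L}

/-- The complete 3-partite graph with three parts of size `n`. -/
def completeThreePartite (n : ℕ) : SimpleGraph (Fin 3 × Fin n) :=
  SimpleGraph.fromRel (fun u v => u.1 ≠ v.1)

/-! ### Auxiliary material -/

lemma ctp_adj_iff {n : ℕ} (u v : Fin 3 × Fin n) :
    (completeThreePartite n).Adj u v ↔ u.1 ≠ v.1 := by
  rw [completeThreePartite, SimpleGraph.fromRel_adj]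
  constructor
  · rintro ⟨-, h | h⟩
    · exact h
    · exact h.symm
  · intro h
    exact ⟨fun e => h (congrArg Prod.fst e), Or.inl h⟩

/-- The encoding of pairs as labels. -/
def Epair (n : ℕ) : Fin n × Fin n ≃ Fin (n ^ 2) :=
  finProdFinEquiv.trans (finCongr (pow_two n).symm)

/-- Label generator. -/
def gfun (n : ℕ) (v : Fin 3 × Fin n) (k : Fin n) : Fin (n ^ 2) :=
  if v.1.val = 0 then Epair n (v.2, k)
  else if v.1.val = 1 then Epair n (k, v.2)
  else Epair n (k, k + v.2)

/-- Label sets for the optimal representation. -/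
def Lrep (n : ℕ) (v : Fin 3 × Fin n) : Finset (Fin (n ^ 2)) :=
  Finset.image (gfun n v) Finset.univ

lemma L_disj {n : ℕ} (q : Fin 3) (i j : Fin n) (hij : i ≠ j) :
    ¬ (Lrep n (q, i) ∩ Lrep n (q, j)).Nonempty := by
  haveI : NeZero n := ⟨i.pos.ne'⟩
  rintro ⟨x, hx⟩
  rw [Finset.mem_inter] at hx
  obtain ⟨h1, h2⟩ := hx
  simp only [Lrep, Finset.mem_image, Finset.mem_univ, true_and] at h1 h2
  obtain ⟨k, hk⟩ := h1
  obtain ⟨k', hk'⟩ := h2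
  rw [← hk'] at hk
  obtain ⟨qv, hq⟩ := q
  interval_cases qv
  · simp [gfun, Prod.ext_iff] at hk
    exact hij hk.1
  · simp [gfun, Prod.ext_iff] at hk
    exact hij hk.2
  · simp [gfun, Prod.ext_iff] at hk
    obtain ⟨e1, e2⟩ := hk
    subst e1
    exact hij (add_left_cancel e2)

lemma L_meet {n : ℕ} [NeZero n] (q r : Fin 3) (h : q ≠ r) (i j : Fin n) :
    (Lrep n (q, i) ∩ Lrep n (r, j)).Nonempty := by
  have mem : ∀ (s : Fin 3) (c : Fin n) (x : Fin (n ^ 2)),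
      (∃ k, gfun n (s, c) k = x) → x ∈ Lrep n (s, c) := by
    intro s c x hx
    obtain ⟨k, hk⟩ := hx
    exact Finset.mem_image.2 ⟨k, Finset.mem_univ k, hk⟩
  obtain ⟨qv, hq⟩ := q
  obtain ⟨rv, hr⟩ := r
  have hqr : qv ≠ rv := fun e => h (by simp [e])
  interval_cases qv <;> interval_cases rv
  · exact absurd rfl hqr
  · exact ⟨Epair n (i, j), Finset.mem_inter.2
      ⟨mem _ _ _ ⟨j, by simp [gfun]⟩, mem _ _ _ ⟨i, by simp [gfun]⟩⟩⟩
  · exact ⟨Epair n (i, i + j), Finset.mem_inter.2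
      ⟨mem _ _ _ ⟨i + j, by simp [gfun]⟩, mem _ _ _ ⟨i, by simp [gfun]⟩⟩⟩
  · exact ⟨Epair n (j, i), Finset.mem_inter.2
      ⟨mem _ _ _ ⟨j, by simp [gfun]⟩, mem _ _ _ ⟨i, by simp [gfun]⟩⟩⟩
  · exact absurd rfl hqr
  · exact ⟨Epair n (i - j, i), Finset.mem_inter.2
      ⟨mem _ _ _ ⟨i - j, by simp [gfun]⟩,
       mem _ _ _ ⟨i - j, by simp [gfun, sub_add_cancel]⟩⟩⟩
  · exact ⟨Epair n (j, j + i), Finset.mem_inter.2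
      ⟨mem _ _ _ ⟨j, by simp [gfun]⟩, mem _ _ _ ⟨j + i, by simp [gfun]⟩⟩⟩
  · exact ⟨Epair n (j - i, j), Finset.mem_inter.2
      ⟨mem _ _ _ ⟨j - i, by simp [gfun, sub_add_cancel]⟩,
       mem _ _ _ ⟨j - i, by simp [gfun]⟩⟩⟩
  · exact absurd rfl hqr

lemma ctp_upper (n : ℕ) :
    IsSIRep (completeThreePartite n) (n ^ 2) (fun _ => (0 : ℝ)) (fun _ => 1) (Lrep n) := by
  refine ⟨fun _ => zero_lt_one, fun u v huv => ?_⟩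
  haveI : NeZero n := ⟨(u.2).pos.ne'⟩
  rw [ctp_adj_iff]
  have hint : (Set.Ioo (0 : ℝ) 1 ∩ Set.Ioo 0 1).Nonempty :=
    ⟨1 / 2, ⟨by norm_num, by norm_num⟩, ⟨by norm_num, by norm_num⟩⟩
  constructor
  · intro h
    obtain ⟨q, i⟩ := u
    obtain ⟨r, j⟩ := v
    exact ⟨hint, L_meet q r h i j⟩
  · rintro ⟨-, hlab⟩
    intro heq
    obtain ⟨q, i⟩ := u
    obtain ⟨r, j⟩ := v
    simp only at heq
    subst heq
    have hij : i ≠ j := fun e => huv (by simp [e])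
    exact L_disj q i j hij hlab

lemma ctp_lower {n d : ℕ} {a b : Fin 3 × Fin n → ℝ} {L : Fin 3 × Fin n → Finset (Fin d)}
    (h : IsSIRep (completeThreePartite n) d a b L) : n ^ 2 ≤ d := by
  rcases Nat.eq_zero_or_pos n with hn | hn
  · simp [hn]
  obtain ⟨hab, hadj⟩ := h
  obtain ⟨v₀, -, hmin⟩ := Finset.exists_min_image Finset.univ b
    ⟨((0 : Fin 3), ⟨0, hn⟩), Finset.mem_univ _⟩
  set p := v₀.1 with hp
  have hne1 : ∀ x : Fin 3, x + 1 ≠ x := by decide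
  have hne2 : ∀ x : Fin 3, x + 2 ≠ x := by decide
  have hne3 : ∀ x : Fin 3, x + 1 ≠ x + 2 := by decide
  have key : ∀ u : Fin 3 × Fin n, u.1 ≠ p → a u < b v₀ ∧ b v₀ ≤ b u := by
    intro u hu
    refine ⟨?_, hmin u (Finset.mem_univ u)⟩
    have hne : u ≠ v₀ := fun e => hu (congrArg Prod.fst e)
    have hA : (completeThreePartite n).Adj u v₀ := (ctp_adj_iff _ _).2 hu
    obtain ⟨⟨y, hy1, hy2⟩, -⟩ := (hadj u v₀ hne).1 hA
    exact lt_trans hy1.1 hy2.2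
  have hint : ∀ u u' : Fin 3 × Fin n, u.1 ≠ p → u'.1 ≠ p →
      (Set.Ioo (a u) (b u) ∩ Set.Ioo (a u') (b u')).Nonempty := by
    intro u u' hu hu'
    obtain ⟨h1, h2⟩ := key u hu
    obtain ⟨h1', h2'⟩ := key u' hu'
    obtain ⟨t, ht1, ht2⟩ := exists_between (max_lt h1 h1' : max (a u) (a u') < b v₀)
    exact ⟨t, ⟨lt_of_le_of_lt (le_max_left _ _) ht1, lt_of_lt_of_le ht2 h2⟩,
      ⟨lt_of_le_of_lt (le_max_right _ _) ht1, lt_of_lt_of_le ht2 h2'⟩⟩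
  have hdisj : ∀ (q : Fin 3) (i j : Fin n), q ≠ p → i ≠ j →
      L (q, i) ∩ L (q, j) = ∅ := by
    intro q i j hq hij
    have hne : ((q, i) : Fin 3 × Fin n) ≠ (q, j) := fun e => hij (by
      injection e with _ e2)
    have hnadj : ¬ (completeThreePartite n).Adj (q, i) (q, j) := by
      rw [ctp_adj_iff]; simp
    rw [← Finset.not_nonempty_iff_eq_empty]
    intro hlab
    exact hnadj ((hadj _ _ hne).2 ⟨hint _ _ hq hq, hlab⟩)
  have hmeet : ∀ i j : Fin n, (L (p + 1, i) ∩ L (p + 2, j)).Nonempty := by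
    intro i j
    have hA : (completeThreePartite n).Adj (p + 1, i) (p + 2, j) :=
      (ctp_adj_iff _ _).2 (hne3 p)
    exact ((hadj _ _ (fun e => hne3 p (congrArg Prod.fst e))).1 hA).2
  choose f hf using fun ij : Fin n × Fin n => hmeet ij.1 ij.2
  have hinj : Function.Injective f := by
    rintro ⟨i, j⟩ ⟨i', j'⟩ hee
    have h1 := Finset.mem_inter.1 (hf (i, j))
    have h2 := Finset.mem_inter.1 (hf (i', j'))
    have hi : i = i' := by
      by_contra hii
      have hm : f (i, j) ∈ L (p + 1, i) ∩ L (p + 1, i') :=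
        Finset.mem_inter.2 ⟨h1.1, hee ▸ h2.1⟩
      rw [hdisj (p + 1) i i' (hne1 p) hii] at hm
      exact Finset.notMem_empty _ hm
    have hj : j = j' := by
      by_contra hjj
      have hm : f (i, j) ∈ L (p + 2, j) ∩ L (p + 2, j') :=
        Finset.mem_inter.2 ⟨h1.2, hee ▸ h2.2⟩
      rw [hdisj (p + 2) j j' (hne2 p) hjj] at hm
      exact Finset.notMem_empty _ hm
    rw [hi, hj]
  calc n ^ 2 = Fintype.card (Fin n × Fin n) := by simp [pow_two]
    _ ≤ Fintype.card (Fin d) := Fintype.card_le_of_injective f hinj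
    _ = d := Fintype.card_fin d

instance ctpDecidable (n : ℕ) : DecidableRel (completeThreePartite n).Adj := fun u v =>
  decidable_of_iff _ (ctp_adj_iff u v).symm

lemma ctp_edge_count (n : ℕ) : (completeThreePartite n).edgeSet.ncard = 3 * n ^ 2 := by
  have hdeg : ∀ v : Fin 3 × Fin n, (completeThreePartite n).degree v = 2 * n := by
    intro v
    rw [← SimpleGraph.card_neighborFinset_eq_degree]
    have : (completeThreePartite n).neighborFinset v =
        Finset.univ.filter (fun u : Fin 3 × Fin n => ¬ u.1 = v.1) := by
      ext u
      simp [SimpleGraph.mem_neighborFinset, ctp_adj_iff, ne_comm]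
    rw [this]
    have hsplit := Finset.card_filter_add_card_filter_not
      (s := (Finset.univ : Finset (Fin 3 × Fin n))) (p := fun u => u.1 = v.1)
    have heq : Finset.univ.filter (fun u : Fin 3 × Fin n => u.1 = v.1) =
        Finset.image (fun i : Fin n => (v.1, i)) Finset.univ := by
      ext u
      simp only [Finset.mem_filter, Finset.mem_univ, true_and, Finset.mem_image]
      constructor
      · intro h1
        exact ⟨u.2, by rw [← h1]⟩
      · rintro ⟨i, rfl⟩
        rfl
    have hcard1 : (Finset.univ.filter (fun u : Fin 3 × Fin n => u.1 = v.1)).card = n := by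
      rw [heq, Finset.card_image_of_injective _ (fun i j e => by injection e),
        Finset.card_univ, Fintype.card_fin]
    have hcu : (Finset.univ : Finset (Fin 3 × Fin n)).card = 3 * n := by
      simp [Fintype.card_prod]
    omega
  have hsum := SimpleGraph.sum_degrees_eq_twice_card_edges (completeThreePartite n)
  rw [Finset.sum_congr rfl (fun v _ => hdeg v)] at hsum
  simp only [Finset.sum_const, Finset.card_univ, Fintype.card_prod, Fintype.card_fin,
    smul_eq_mul] at hsum
  have hcard : (completeThreePartite n).edgeFinset.card = 3 * n ^ 2 := by
    have : 3 * n * (2 * n) = 2 * (3 * n ^ 2) := by ring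
    omega
  rw [Set.ncard_eq_toFinset_card', ← SimpleGraph.edgeFinset, hcard]

/-- For the complete 3-partite graph `G` with parts of equal size `n`,
`si G = n²`, which also equals `|V(G)|²/9` and `|E(G)|/3`. -/
theorem si_completeThreePartite (n : ℕ) :
    si (completeThreePartite n) = n ^ 2 ∧
    n ^ 2 = (Fintype.card (Fin 3 × Fin n)) ^ 2 / 9 ∧
    n ^ 2 = (completeThreePartite n).edgeSet.ncard / 3 := by
  refine ⟨?_, ?_, ?_⟩
  · apply le_antisymm
    · exact Nat.sInf_le ⟨_, _, _, ctp_upper n⟩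
    · refine le_csInf ⟨_, _, _, _, ctp_upper n⟩ ?_
      rintro d ⟨a, b, L, h⟩
      exact ctp_lower h
  · have : Fintype.card (Fin 3 × Fin n) = 3 * n := by simp [Fintype.card_prod]
    rw [this]
    have : (3 * n) ^ 2 = 9 * n ^ 2 := by ring
    rw [this, Nat.mul_div_cancel_left _ (by norm_num : (0:ℕ) < 9)]
  · rw [ctp_edge_count, Nat.mul_div_cancel_left _ (by norm_num : (0:ℕ) < 3)]
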